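/- Let H be a complex Hilbert space and let J, J' be antiunitaries on H such that J ∘ T ∘ J⁻¹ = J' ∘ T ∘ J'⁻¹ for every compact operator T on H. Then there exists λ ∈ ℂ with ‖λ‖ = 1 such that J' = λ • J (i.e., J' x = λ • (J x) for all x ∈ H). In particular, an antiunitary implementing a given Real structure on K(H) is unique up to a unimodular scalar. -/

import Mathlib

open scoped ComplexInnerProductSpace

/-- A rank-one operator `x ↦ ⟪u, x⟫ • v` is compact. -/
lemma rankOne_isCompactOperator {H : Type*} [NormedAddCommGroup H] [InnerProductSpace ℂ H]
    (u v : H) : IsCompactOperator (((innerSL ℂ u).smulRight v : H →L[ℂ] H) : H → H) := by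
  refine ⟨(fun a : ℂ => a • v) '' Metric.closedBall 0 ‖u‖, ?_, ?_⟩
  · exact (isCompact_closedBall 0 ‖u‖).image (by continuity)
  · refine Filter.mem_of_superset (Metric.closedBall_mem_nhds 0 one_pos) ?_
    intro x hx
    refine ⟨⟪u, x⟫, ?_, rfl⟩
    simp only [Metric.mem_closedBall, dist_zero_right] at hx ⊢
    calc ‖⟪u, x⟫‖ ≤ ‖u‖ * ‖x‖ := norm_inner_le_norm u x
      _ ≤ ‖u‖ * 1 := mul_le_mul_of_nonneg_left hx (norm_nonneg u)
      _ = ‖u‖ := mul_one _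

/-- Let `J, J'` be antiunitaries on a complex Hilbert space `H`
(with inverses `Jinv`, `J'inv`) such that `J ∘ T ∘ J⁻¹ = J' ∘ T ∘ J'⁻¹` for every
compact operator `T` on `H`.  Then `J' = λ • J` for some unimodular scalar `λ ∈ ℂ`:
an antiunitary implementing a given Real structure on `K(H)` is unique up to a
unimodular scalar. -/
theorem stmt_8 {H : Type*} [NormedAddCommGroup H] [InnerProductSpace ℂ H] [CompleteSpace H]
    (J Jinv J' J'inv : H → H)
    (hJ1 : Function.LeftInverse Jinv J) (hJ2 : Function.RightInverse Jinv J)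
    (hJ'1 : Function.LeftInverse J'inv J') (hJ'2 : Function.RightInverse J'inv J')
    (haddJ : ∀ x y : H, J (x + y) = J x + J y)
    (hconjJ : ∀ (c : ℂ) (x : H), J (c • x) = (starRingEnd ℂ c) • J x)
    (hinnerJ : ∀ x y : H, ⟪J x, J y⟫ = ⟪y, x⟫)
    (haddJ' : ∀ x y : H, J' (x + y) = J' x + J' y)
    (hconjJ' : ∀ (c : ℂ) (x : H), J' (c • x) = (starRingEnd ℂ c) • J' x)
    (hinnerJ' : ∀ x y : H, ⟪J' x, J' y⟫ = ⟪y, x⟫)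
    (hcomm : ∀ T : H →L[ℂ] H, IsCompactOperator T →
      ∀ x : H, J (T (Jinv x)) = J' (T (J'inv x))) :
    ∃ c : ℂ, ‖c‖ = 1 ∧ ∀ x : H, J' x = c • J x := by
  have hJ0 : J 0 = 0 := right_eq_add.mp (by rw [← haddJ, add_zero])
  have hJ'0 : J' 0 = 0 := right_eq_add.mp (by rw [← haddJ', add_zero])
  by_cases hH : ∃ x₀ : H, x₀ ≠ 0
  swap
  · push_neg at hH
    exact ⟨1, norm_one, fun x => by rw [hH x, hJ0, hJ'0, smul_zero]⟩
  obtain ⟨x₀, hx₀⟩ := hH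
  -- The linear map V = Jinv ∘ J'
  set V : H → H := fun x => Jinv (J' x) with hV
  -- V is ℂ-linear in the scalar
  have hVsmul : ∀ (a : ℂ) (w : H), V (a • w) = a • V w := by
    intro a w
    have h1 : J' (a • w) = (starRingEnd ℂ a) • J' w := hconjJ' a w
    have h2 : (starRingEnd ℂ a) • J' w = J (a • V w) := by
      rw [hconjJ a (V w), hJ2 (J' w)]
    simp only [hV, h1, h2, hJ1 (a • Jinv (J' w))]
  -- V preserves norms
  have hnormJ : ∀ z : H, ‖J z‖ = ‖z‖ := by
    intro z
    rw [@norm_eq_sqrt_re_inner ℂ _ _ _ _ (J z), @norm_eq_sqrt_re_inner ℂ _ _ _ _ z, hinnerJ]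
  have hnormJ' : ∀ z : H, ‖J' z‖ = ‖z‖ := by
    intro z
    rw [@norm_eq_sqrt_re_inner ℂ _ _ _ _ (J' z), @norm_eq_sqrt_re_inner ℂ _ _ _ _ z, hinnerJ']
  have hnormV : ∀ z : H, ‖V z‖ = ‖z‖ := by
    intro z
    have : ‖J (V z)‖ = ‖V z‖ := hnormJ _
    rw [hV] at this ⊢
    rw [← this, hJ2 (J' z), hnormJ' z]
  -- V commutes with compact operators
  have hVT : ∀ (T : H →L[ℂ] H), IsCompactOperator T → ∀ y : H, T (V y) = V (T y) := by
    intro T hT y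
    have h := hcomm T hT (J' y)
    rw [hJ'1 y] at h
    have := congrArg Jinv h
    rw [hJ1] at this
    exact this
  -- the key rank-one identity
  have hkey : ∀ u v y : H, ⟪u, V y⟫ • v = ⟪u, y⟫ • V v := by
    intro u v y
    have h := hVT ((innerSL ℂ u).smulRight v) (rankOne_isCompactOperator u v) y
    simp only [ContinuousLinearMap.smulRight_apply, innerSL_apply_apply] at h
    rw [h, hVsmul]
  -- extract the scalar
  set d : ℂ := ⟪x₀, V x₀⟫ / ⟪x₀, x₀⟫ with hd
  have hx₀inner : ⟪x₀, x₀⟫ ≠ 0 := fun h => hx₀ (inner_self_eq_zero.mp h)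
  have hVx₀ : V x₀ = d • x₀ := by
    have h := hkey x₀ x₀ x₀
    have h2 : V x₀ = (⟪x₀, x₀⟫)⁻¹ • (⟪x₀, V x₀⟫ • x₀) := by
      rw [h, inv_smul_smul₀ hx₀inner]
    rw [h2, smul_smul, hd, div_eq_inv_mul]
  have hVy : ∀ y : H, V y = d • y := by
    intro y
    have sep : ∀ u : H, ⟪u, V y - d • y⟫ = 0 := by
      intro u
      have h := hkey u x₀ y
      rw [hVx₀, smul_comm] at h
      have h2 : (⟪u, V y⟫ - ⟪u, y⟫ * d) • x₀ = 0 := by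
        rw [sub_smul, h, mul_smul, smul_comm, sub_self]
      have h3 : ⟪u, V y⟫ - ⟪u, y⟫ * d = 0 := by
        rcases smul_eq_zero.mp h2 with h' | h'
        · exact h'
        · exact absurd h' hx₀
      rw [inner_sub_right, inner_smul_right, sub_eq_zero]
      rw [sub_eq_zero] at h3
      rw [h3, mul_comm]
    have := sep (V y - d • y)
    rw [inner_self_eq_zero] at this
    exact sub_eq_zero.mp this
  have hdnorm : ‖d‖ = 1 := by
    have h := hnormV x₀
    rw [hVy x₀, norm_smul] at h
    have hx₀n : ‖x₀‖ ≠ 0 := norm_ne_zero_iff.mpr hx₀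
    field_simp at h
    exact h
  refine ⟨starRingEnd ℂ d, by rw [RCLike.norm_conj]; exact hdnorm, fun x => ?_⟩
  have : J' x = J (V x) := (hJ2 (J' x)).symm
  rw [this, hVy x, hconjJ]
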